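/- Let m_0, …, m_k and e be positive integers with m_j dividing e for every j, and let ℓ = gcd(m_0, …, m_k). Then the polynomial t^e − x_0^{m_0} ⋯ x_k^{m_k} factors in ℂ[x_0, …, x_k, t] as a product of exactly ℓ irreducible factors, and these factors are pairwise non-associated (in particular the polynomial is squarefree). -/

import Mathlib

open Polynomial IntermediateField AdjoinRoot

universe u

/-- Generalization of `X_pow_sub_C_irreducible_of_odd` to fields containing a square root
of `-1`: for such fields, `X ^ n - C a` is irreducible whenever `a` is not a `p`-th power
for any prime `p ∣ n`. -/
theorem X_pow_sub_C_irreducible_of_sqrt_neg_one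
    {K : Type u} [Field K] (I : K) (hI : I ^ 2 = -1)
    {n : ℕ} (hn : n ≠ 0) {a : K} (ha : ∀ p : ℕ, p.Prime → p ∣ n → ∀ b : K, b ^ p ≠ a) :
    Irreducible (X ^ n - C a) := by
  induction n using induction_on_primes generalizing K a with
  | zero => exact absurd rfl hn
  | one => simpa using irreducible_X_sub_C a
  | prime_mul p n hp IH =>
    rw [mul_comm]
    apply X_pow_mul_sub_C_irreducible
      (X_pow_sub_C_irreducible_of_prime hp (ha p hp (dvd_mul_right _ _)))
    intro E _ _ x hx
    have hxint : IsIntegral K x := not_not.mp fun h ↦ by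
      simpa only [degree_zero, degree_X_pow_sub_C hp.pos,
        WithBot.natCast_ne_bot] using congr_arg degree (hx.symm.trans (dif_neg h))
    have hn0 : n ≠ 0 := by rintro rfl; exact hn (mul_zero p)
    apply IH (algebraMap K K⟮x⟯ I) (by rw [← map_pow, hI, map_neg, map_one]) hn0
    intro q hq hqn b hb
    have key : (Algebra.norm K b) ^ q = (-1) ^ (p + 1) * a := by
      rw [← map_pow, hb, ← adjoin.powerBasis_gen hxint,
        Algebra.PowerBasis.norm_gen_eq_coeff_zero_minpoly]
      simp [minpoly_gen, hx, hp.ne_zero.symm, pow_succ]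
    obtain ⟨c, hc⟩ : ∃ c : K, c ^ q = (-1 : K) ^ (p + 1) := by
      rcases eq_or_ne q 2 with rfl | hq2
      · exact ⟨I ^ (p + 1), by rw [← pow_mul, mul_comm (p + 1) 2, pow_mul, hI]⟩
      · refine ⟨(-1) ^ (p + 1), ?_⟩
        rcases Nat.even_or_odd (p + 1) with h | h
        · rw [h.neg_one_pow, one_pow]
        · rw [h.neg_one_pow, (hq.odd_of_ne_two hq2).neg_one_pow]
    apply ha q hq (dvd_mul_of_dvd_right hqn p) (c * Algebra.norm K b)
    rw [mul_pow, hc, key, ← mul_assoc, ← mul_pow, neg_mul_neg, one_mul, one_pow, one_mul]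

/-- Product formula: `∏ (X ^ e' - ζ^i N) = X ^ (e' ℓ) - N ^ ℓ` for a primitive `ℓ`-th root of
unity `ζ`. -/
lemma prod_X_pow_sub_C_zeta {R : Type*} [CommRing R] [IsDomain R] {ℓ : ℕ} (hℓ : 0 < ℓ) {ζ : R}
    (hζ : IsPrimitiveRoot ζ ℓ) (N : R) (e' : ℕ) :
    ∏ i ∈ Finset.range ℓ, ((X : R[X]) ^ e' - C (ζ ^ i * N)) = X ^ (e' * ℓ) - C (N ^ ℓ) := by
  have base := X_pow_sub_C_eq_prod hζ hℓ (rfl : N ^ ℓ = N ^ ℓ)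
  have h2 := congrArg (Polynomial.aeval ((X : R[X]) ^ e')) base
  simpa [map_prod, pow_mul] using h2.symm

/-- If `p` does not divide `m' j` for some `j`, then `c • ∏ xₗ ^ m'ₗ` is not a `p`-th power
of a polynomial. -/
lemma not_pow_eq_C_mul_prod {k : ℕ} (m' : Fin (k + 1) → ℕ) {p : ℕ} (hp : p.Prime)
    (j : Fin (k + 1)) (hpj : ¬ p ∣ m' j) {c : ℂ} (hc : c ≠ 0)
    (r : MvPolynomial (Fin (k + 1)) ℂ) :
    r ^ p ≠ MvPolynomial.C c * ∏ l, MvPolynomial.X l ^ m' l := by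
  intro hr
  set φ : MvPolynomial (Fin (k + 1)) ℂ →ₐ[ℂ] ℂ[X] :=
    MvPolynomial.aeval (fun l => if l = j then (Polynomial.X : ℂ[X]) else 1) with hφ
  have h1 := congrArg φ hr
  rw [map_pow, map_mul, hφ, MvPolynomial.aeval_C, map_prod] at h1
  have h2 : ∀ l : Fin (k + 1),
      φ (MvPolynomial.X l ^ m' l) = (if l = j then (Polynomial.X : ℂ[X]) else 1) ^ m' l := by
    intro l; rw [map_pow, hφ, MvPolynomial.aeval_X]
  rw [Finset.prod_congr rfl (fun l _ => h2 l), Finset.prod_eq_single j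
    (fun l _ hl => by simp [hl]) (by simp)] at h1
  simp only [if_true, Polynomial.algebraMap_eq] at h1
  have hdeg := congrArg natDegree h1
  rw [natDegree_pow, natDegree_C_mul hc, natDegree_X_pow] at hdeg
  exact hpj ⟨_, hdeg.symm⟩

/-- A product of pairwise non-associated irreducible elements is squarefree. -/
lemma squarefree_prod_of_pairwise_not_associated {α : Type*} [CommMonoidWithZero α] [IsCancelMulZero α]
    [UniqueFactorizationMonoid α] [Nontrivial α] {ι : Type*} [Fintype ι] (f : ι → α)
    (hf : ∀ i, Irreducible (f i)) (hpair : Pairwise fun i j => ¬ Associated (f i) (f j)) :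
    Squarefree (∏ i, f i) := by
  classical
  have hprod : (∏ i, f i) ≠ 0 := Finset.prod_ne_zero_iff.mpr fun i _ => (hf i).ne_zero
  intro x hx
  by_contra hxu
  have hx0 : x ≠ 0 := by
    rintro rfl
    exact hprod (zero_dvd_iff.mp (by simpa using hx))
  obtain ⟨q, hq, hqx⟩ := WfDvdMonoid.exists_irreducible_factor hxu hx0
  have hq' : Prime q := UniqueFactorizationMonoid.irreducible_iff_prime.mp hq
  have hqq : q * q ∣ ∏ i, f i := (mul_dvd_mul hqx hqx).trans hx
  obtain ⟨i, -, hqi⟩ := hq'.exists_mem_finset_dvd ((dvd_mul_right q q).trans hqq)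
  have hass_i : Associated q (f i) := hq.associated_of_dvd (hf i) hqi
  obtain ⟨v, hv⟩ := id hass_i
  have hsplit : ∏ j, f j = f i * ∏ j ∈ Finset.univ.erase i, f j :=
    (Finset.mul_prod_erase _ _ (Finset.mem_univ i)).symm
  have h1 : q ∣ ↑v * ∏ j ∈ Finset.univ.erase i, f j := by
    have : q * q ∣ q * (↑v * ∏ j ∈ Finset.univ.erase i, f j) := by
      rw [← mul_assoc, hv, ← hsplit]; exact hqq
    exact (mul_dvd_mul_iff_left hq'.ne_zero).mp this
  have h2 : q ∣ ∏ j ∈ Finset.univ.erase i, f j := by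
    rwa [Units.dvd_mul_left] at h1
  obtain ⟨j, hjmem, hqj⟩ := hq'.exists_mem_finset_dvd h2
  have hji : j ≠ i := (Finset.mem_erase.mp hjmem).1
  exact hpair hji.symm (hass_i.symm.trans (hq.associated_of_dvd (hf j) hqj))

set_option synthInstance.maxHeartbeats 1000000 in
set_option maxHeartbeats 2000000 in
/-- Let `m_0, …, m_k` and `e` be positive integers with `m j ∣ e` for
every `j` and let `ℓ = gcd(m_0, …, m_k)`.  Then `t^e − x_0^{m_0} ⋯ x_k^{m_k}` factors in
`ℂ[x_0, …, x_k, t]` as a product of exactly `ℓ` irreducible factors, pairwise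
non-associated; in particular the polynomial is squarefree. -/
theorem stmt_3 (k e : ℕ) (he : 0 < e) (m : Fin (k + 1) → ℕ)
    (hm : ∀ j, 0 < m j) (hme : ∀ j, m j ∣ e) :
    (∃ f : Fin (Finset.univ.gcd m) → (MvPolynomial (Fin (k + 1)) ℂ)[X],
        (∀ i, Irreducible (f i)) ∧
        (Pairwise fun i j => ¬ Associated (f i) (f j)) ∧
        ∏ i, f i =
          (X : (MvPolynomial (Fin (k + 1)) ℂ)[X]) ^ e - C (∏ j, MvPolynomial.X j ^ m j)) ∧
    Squarefree
      ((X : (MvPolynomial (Fin (k + 1)) ℂ)[X]) ^ e - C (∏ j, MvPolynomial.X j ^ m j)) := by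
  classical
  set R := MvPolynomial (Fin (k + 1)) ℂ with hRdef
  set ℓ := Finset.univ.gcd m with hℓdef
  have hℓm : ∀ j, ℓ ∣ m j := fun j => Finset.gcd_dvd (Finset.mem_univ j)
  have hℓ0 : 0 < ℓ :=
    Nat.pos_of_ne_zero fun h => (hm 0).ne' (Nat.eq_zero_of_zero_dvd (by have h' := hℓm 0; rw [h] at h'; exact h'))
  have hℓe : ℓ ∣ e := (hℓm 0).trans (hme 0)
  set e' := e / ℓ with he'def
  have hee : e' * ℓ = e := Nat.div_mul_cancel hℓe
  have he'0 : 0 < e' := Nat.div_pos (Nat.le_of_dvd he hℓe) hℓ0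
  set m' : Fin (k + 1) → ℕ := fun j => m j / ℓ with hm'def
  have hm'm : ∀ j, m' j * ℓ = m j := fun j => Nat.div_mul_cancel (hℓm j)
  have hgcd1 : Finset.univ.gcd m' = 1 :=
    Finset.gcd_div_eq_one (Finset.mem_univ 0) (hm 0).ne'
  obtain ⟨ζ, hζ⟩ : ∃ z : ℂ, IsPrimitiveRoot z ℓ :=
    ⟨_, Complex.isPrimitiveRoot_exp ℓ hℓ0.ne'⟩
  set N : R := ∏ j, MvPolynomial.X j ^ m' j with hNdef
  have hN0 : N ≠ 0 :=
    Finset.prod_ne_zero_iff.mpr fun j _ => pow_ne_zero _ (MvPolynomial.X_ne_zero j)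
  have hNM : N ^ ℓ = ∏ j, MvPolynomial.X j ^ m j := by
    rw [hNdef, ← Finset.prod_pow]
    exact Finset.prod_congr rfl fun j _ => by rw [← pow_mul, hm'm j]
  have hζC : IsPrimitiveRoot (MvPolynomial.C ζ : R) ℓ :=
    hζ.map_of_injective (MvPolynomial.C_injective _ _)
  have hζ0 : ζ ≠ 0 := hζ.ne_zero hℓ0.ne'
  set f : Fin ℓ → R[X] :=
    fun i => X ^ e' - C ((MvPolynomial.C ζ) ^ (i : ℕ) * N) with hfdef
  have hmonic : ∀ i : Fin ℓ, (f i).Monic := fun i => monic_X_pow_sub_C _ he'0.ne'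
  -- irreducibility of each factor
  have hirr : ∀ i : Fin ℓ, Irreducible (f i) := by
    intro i
    rw [(hmonic i).irreducible_iff_irreducible_map_fraction_map (K := FractionRing R)]
    have hmap : (f i).map (algebraMap R (FractionRing R)) =
        X ^ e' - C (algebraMap R (FractionRing R) ((MvPolynomial.C ζ) ^ (i : ℕ) * N)) := by
      simp [hfdef, Polynomial.map_sub, Polynomial.map_pow]
    rw [hmap]
    apply X_pow_sub_C_irreducible_of_sqrt_neg_one
      (algebraMap R (FractionRing R) (MvPolynomial.C Complex.I))
      (by rw [← map_pow, ← map_pow, Complex.I_sq, map_neg, map_neg, map_one, map_one])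
      he'0.ne'
    intro p hp hpe b hb
    have hbint : IsIntegral R b := by
      refine ⟨X ^ p - C ((MvPolynomial.C ζ) ^ (i : ℕ) * N),
        monic_X_pow_sub_C _ hp.ne_zero, ?_⟩
      rw [eval₂_sub, eval₂_pow, eval₂_X, eval₂_C, hb, sub_self]
    obtain ⟨r, hr⟩ := IsIntegrallyClosed.isIntegral_iff.mp hbint
    have hrp : r ^ p = (MvPolynomial.C ζ) ^ (i : ℕ) * N :=
      IsFractionRing.injective R (FractionRing R) (by rw [map_pow, hr, hb])
    obtain ⟨j, hj⟩ : ∃ j, ¬ p ∣ m' j := by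
      by_contra h
      push_neg at h
      have hd : p ∣ Finset.univ.gcd m' := Finset.dvd_gcd fun j _ => h j
      rw [hgcd1] at hd
      exact hp.one_lt.ne' (Nat.dvd_one.mp hd)
    rw [← map_pow, hNdef] at hrp
    exact not_pow_eq_C_mul_prod m' hp j hj (pow_ne_zero _ hζ0) r hrp
  -- pairwise non-associated
  have hpair : Pairwise fun i j => ¬ Associated (f i) (f j) := by
    intro i j hij hass
    have heq : f i = f j := eq_of_monic_of_associated (hmonic i) (hmonic j) hass
    rw [hfdef] at heq
    have h2 : (C ((MvPolynomial.C ζ) ^ (i : ℕ) * N) : R[X]) =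
        C ((MvPolynomial.C ζ) ^ (j : ℕ) * N) := sub_right_injective heq
    have h3 : (MvPolynomial.C ζ) ^ (i : ℕ) * N = (MvPolynomial.C ζ) ^ (j : ℕ) * N :=
      Polynomial.C_injective h2
    have h4 : (MvPolynomial.C ζ) ^ (i : ℕ) = (MvPolynomial.C ζ) ^ (j : ℕ) :=
      mul_right_cancel₀ hN0 h3
    rw [← map_pow, ← map_pow] at h4
    have h5 : ζ ^ (i : ℕ) = ζ ^ (j : ℕ) := MvPolynomial.C_injective _ _ h4
    exact hij (Fin.ext (hζ.pow_inj i.isLt j.isLt h5))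
  -- the product
  have hprod : ∏ i, f i =
      (X : R[X]) ^ e - C (∏ j, MvPolynomial.X j ^ m j) := by
    rw [hfdef]
    rw [Fin.prod_univ_eq_prod_range
      (fun i => (X : R[X]) ^ e' - C ((MvPolynomial.C ζ) ^ i * N)) ℓ,
      prod_X_pow_sub_C_zeta hℓ0 hζC N e', hee, hNM]
  refine ⟨⟨f, hirr, hpair, hprod⟩, ?_⟩
  rw [← hprod]
  exact squarefree_prod_of_pairwise_not_associated f hirr hpair
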